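/- Let A be an n×n nonnegative irreducible matrix (n ≥ 2), let λ_p > 0 be its Perron eigenvalue (equal to its spectral radius) and let v_p be an associated Perron eigenvector, so that A v_p = λ_p v_p and every component of v_p is strictly positive. Let S = diag(v_p) and B = S^{-1} A S. Then every complex eigenvalue μ of A with μ ≠ λ_p lies in the Gershgorin region of the second type of B^T. -/

import Mathlib

open Matrix
open scoped ENNReal

/-- Non-increasing (descending) sort of a list of reals. -/
noncomputable def sortDesc (l : List ℝ) : List ℝ := (l.insertionSort (· ≤ ·)).reverse

/-- Given the descending rearrangement `l` of `n` numbers, the sum of the largest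
(about) half minus the sum of the smallest (about) half, skipping the middle
element when `n` is odd. -/
noncomputable def halfSumDiff (n : ℕ) (l : List ℝ) : ℝ :=
  if n % 2 = 1 then (l.take ((n - 1) / 2)).sum - (l.drop ((n + 1) / 2)).sum
  else (l.take (n / 2)).sum - (l.drop (n / 2)).sum

/-- Radius of the `i`-th Gershgorin disc of the second type of `M`, computed from
the `i`-th row of `M` with the diagonal entry replaced by `0`. -/
noncomputable def secondTypeRadius {n : ℕ} (M : Matrix (Fin n) (Fin n) ℝ) (i : Fin n) : ℝ :=
  halfSumDiff n (sortDesc (List.ofFn fun j : Fin n => if j = i then 0 else M i j))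

/-- The `i`-th Gershgorin disc of the second type of `M`. -/
noncomputable def secondTypeDisc {n : ℕ} (M : Matrix (Fin n) (Fin n) ℝ) (i : Fin n) : Set ℂ :=
  Metric.closedBall ((M i i : ℝ) : ℂ) (secondTypeRadius M i)

/-- The Gershgorin region of the second type of `M`. -/
noncomputable def secondTypeRegion {n : ℕ} (M : Matrix (Fin n) (Fin n) ℝ) : Set ℂ :=
  ⋃ i : Fin n, secondTypeDisc M i

/-- `μ` is a (complex) eigenvalue of the real matrix `A`, i.e. a complex root of
its characteristic polynomial. -/
def IsEigenvalueC {n : ℕ} (A : Matrix (Fin n) (Fin n) ℝ) (μ : ℂ) : Prop :=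
  ((A.map ((↑) : ℝ → ℂ)).charpoly).IsRoot μ

/-- The `k`-th largest element (1-indexed) among the `n - 1` off-diagonal entries of
column `j` of `B`. -/
noncomputable def kthLargestOffDiag {n : ℕ} (B : Matrix (Fin n) (Fin n) ℝ) (j : Fin n)
    (k : ℕ) : ℝ :=
  (sortDesc (((List.ofFn fun i : Fin n => B i j).eraseIdx j.val))).getD (k - 1) 0

/-- The ℓ_p norm of a vector in ℝ^n. -/
noncomputable def lpNorm {n : ℕ} (p : ℝ≥0∞) (x : Fin n → ℝ) : ℝ :=
  @norm (PiLp p fun _ : Fin n => ℝ) _ ((WithLp.equiv p (∀ _ : Fin n, ℝ)).symm x)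

/-- The seminorm-like quantity `τ_p(B)`: the supremum of `‖Bᵀ x‖_p` over all real
vectors `x` with `xᵀ e = 0` and `‖x‖_p = 1`. -/
noncomputable def tau {n : ℕ} (p : ℝ≥0∞) (B : Matrix (Fin n) (Fin n) ℝ) : ℝ :=
  sSup { t : ℝ | ∃ x : Fin n → ℝ, (∑ i, x i) = 0 ∧ lpNorm p x = 1 ∧ t = lpNorm p (Bᵀ *ᵥ x) }

/-- The Ostrowski–Brauer set `Γ(M)` of a real square matrix `M`. -/
noncomputable def brauerSet {n : ℕ} (M : Matrix (Fin n) (Fin n) ℝ) : Set ℂ :=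
  ⋃ (i : Fin n) (j : Fin n) (_ : i < j),
    { y : ℂ | ‖y - (M i i : ℝ)‖ * ‖y - (M j j : ℝ)‖ ≤
        (∑ k ∈ Finset.univ.filter fun k => k ≠ i, |M i k|) *
        (∑ k ∈ Finset.univ.filter fun k => k ≠ j, |M j k|) }

/-- `cs_j(A)` from Definition 2.3: sorted column sums difference. -/
noncomputable def csCol {n : ℕ} (A : Matrix (Fin n) (Fin n) ℝ) (j : Fin n) : ℝ :=
  halfSumDiff n (sortDesc (List.ofFn fun i : Fin n => A i j))


section Aux

open Polynomial

private lemma sortDesc_perm' (l : List ℝ) : (sortDesc l).Perm l :=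
  (List.reverse_perm _).trans (List.perm_insertionSort _ l)

private lemma sortDesc_sorted' (l : List ℝ) : (sortDesc l).Pairwise (· ≥ ·) := by
  have h := List.pairwise_insertionSort (α := ℝ) (· ≤ ·) l
  exact List.pairwise_reverse.2 (by exact h)

private lemma sum_abs_ge' (c : ℝ) : ∀ t : List ℝ, (∀ a ∈ t, c ≤ a) →
    (t.map fun a => |a - c|).sum = t.sum - t.length * c := by
  intro t
  induction t with
  | nil => simp
  | cons a t ih =>
    intro h
    simp only [List.map_cons, List.sum_cons, List.length_cons]
    rw [ih (fun b hb => h b (List.mem_cons_of_mem _ hb)),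
      abs_of_nonneg (by linarith [h a List.mem_cons_self])]
    push_cast; ring

private lemma sum_abs_le' (c : ℝ) : ∀ t : List ℝ, (∀ a ∈ t, a ≤ c) →
    (t.map fun a => |a - c|).sum = t.length * c - t.sum := by
  intro t
  induction t with
  | nil => simp
  | cons a t ih =>
    intro h
    simp only [List.map_cons, List.sum_cons, List.length_cons]
    rw [ih (fun b hb => h b (List.mem_cons_of_mem _ hb)),
      abs_of_nonpos (by linarith [h a List.mem_cons_self])]
    push_cast; ring

private lemma median_sum' (N : ℕ) (hN : 1 ≤ N) (l : List ℝ) (hlen : l.length = N)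
    (hsort : l.Pairwise (· ≥ ·)) :
    ∃ c : ℝ, (l.map fun a => |a - c|).sum = halfSumDiff N l := by
  have hk : N / 2 < l.length := by omega
  set c := l.get ⟨N / 2, hk⟩ with hc
  refine ⟨c, ?_⟩
  have hget : ∀ (i : ℕ) (h : i < l.length), i ≤ N / 2 → c ≤ l[i] := by
    intro i h hi
    exact hsort.rel_get_of_le (a := ⟨i, h⟩) (b := ⟨N / 2, hk⟩) (by simpa using hi)
  have hget' : ∀ (i : ℕ) (h : i < l.length), N / 2 ≤ i → l[i] ≤ c := by
    intro i h hi
    exact hsort.rel_get_of_le (a := ⟨N / 2, hk⟩) (b := ⟨i, h⟩) (by simpa using hi)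
  have htake : ∀ m, m ≤ N / 2 + 1 → ∀ a ∈ l.take m, c ≤ a := by
    intro m hm a ha
    obtain ⟨i, hi, rfl⟩ := List.mem_iff_getElem.mp ha
    rw [List.length_take] at hi
    rw [List.getElem_take]
    exact hget i (by omega) (by omega)
  have hdrop : ∀ a ∈ l.drop (N / 2), a ≤ c := by
    intro a ha
    obtain ⟨i, hi, rfl⟩ := List.mem_iff_getElem.mp ha
    rw [List.length_drop] at hi
    rw [List.getElem_drop]
    exact hget' (N / 2 + i) (by omega) (by omega)
  rcases Nat.even_or_odd N with he | ho
  · have hmod : N % 2 = 0 := Nat.even_iff.mp he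
    set k := N / 2 with hkdef
    have hlt : (l.take k).length = k := by simp [hlen]; omega
    have hld : (l.drop k).length = k := by simp [hlen]; omega
    have hsum : (l.map fun a => |a - c|).sum
        = ((l.take k).map fun a => |a - c|).sum + ((l.drop k).map fun a => |a - c|).sum := by
      conv_lhs => rw [(List.take_append_drop k l).symm]
      rw [List.map_append, List.sum_append]
    rw [hsum, sum_abs_ge' c _ (htake k (by omega)), sum_abs_le' c _ hdrop,
      halfSumDiff, if_neg (by omega), hlt, hld]
    ring
  · have hmod : N % 2 = 1 := Nat.odd_iff.mp ho
    set k := N / 2 with hkdef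
    have hlt : (l.take (k+1)).length = k+1 := by simp [hlen]; omega
    have hld : (l.drop (k+1)).length = k := by simp [hlen]; omega
    have hdrop' : ∀ a ∈ l.drop (k+1), a ≤ c := by
      intro a ha
      rw [← List.drop_drop] at ha
      exact hdrop a (List.drop_subset _ _ ha)
    have hsum : (l.map fun a => |a - c|).sum
        = ((l.take (k+1)).map fun a => |a - c|).sum
          + ((l.drop (k+1)).map fun a => |a - c|).sum := by
      conv_lhs => rw [(List.take_append_drop (k+1) l).symm]
      rw [List.map_append, List.sum_append]
    have htakesum : (l.take (k+1)).sum = (l.take k).sum + c := List.sum_take_succ l k hk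
    rw [hsum, sum_abs_ge' c _ (htake (k+1) (by omega)), sum_abs_le' c _ hdrop',
      halfSumDiff, if_pos hmod, hlt, hld, htakesum,
      show (N - 1) / 2 = k by omega, show (N + 1) / 2 = k + 1 by omega]
    push_cast
    ring

private lemma charpoly_eval_eq' {N : ℕ} (M : Matrix (Fin N) (Fin N) ℂ) (μ : ℂ) :
    M.charpoly.eval μ = (μ • (1 : Matrix (Fin N) (Fin N) ℂ) - M).det := by
  rw [Matrix.charpoly, eval_det, Matrix.matPolyEquiv_charmatrix]
  have h : Polynomial.eval (Matrix.scalar (Fin N) μ) (X - C M)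
      = μ • (1 : Matrix (Fin N) (Fin N) ℂ) - M := by
    simp only [eval_sub, eval_X, eval_C]
    congr 1
    ext i j
    simp [Matrix.scalar_apply, Matrix.one_apply, Matrix.diagonal_apply]
  rw [h]

end Aux

/-- Corollary 1: for a nonnegative irreducible matrix `A` with Perron
eigenpair `(λ_p, v_p)` (where `λ_p > 0` equals the spectral radius and `v_p > 0`),
every non-Perron eigenvalue of `A` lies in the Gershgorin region of the second type
of `Bᵀ`, where `B = S⁻¹ A S` and `S = diag v_p`. -/
theorem stmt3 {n : ℕ} (hn : 2 ≤ n) (A : Matrix (Fin n) (Fin n) ℝ)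
    (hnonneg : ∀ i j, 0 ≤ A i j)
    (hirr : ∀ i j : Fin n, ∃ k : ℕ, 0 < k ∧ 0 < (A ^ k) i j)
    (lamp : ℝ) (hlampos : 0 < lamp)
    (hperron : IsEigenvalueC A (lamp : ℂ))
    (hspec : ∀ mu : ℂ, IsEigenvalueC A mu → ‖mu‖ ≤ lamp)
    (vp : Fin n → ℝ) (hvp : ∀ i, 0 < vp i) (hAv : A *ᵥ vp = lamp • vp)
    (S B : Matrix (Fin n) (Fin n) ℝ) (hS : S = Matrix.diagonal vp) (hB : B = S⁻¹ * A * S)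
    (mu : ℂ) (hmu : IsEigenvalueC A mu) (hne : mu ≠ (lamp : ℂ)) :
    mu ∈ secondTypeRegion Bᵀ := by
  classical
  -- entries of B
  have hvne : ∀ i, vp i ≠ 0 := fun i => ne_of_gt (hvp i)
  have hSinv : S⁻¹ = Matrix.diagonal (fun i => (vp i)⁻¹) := by
    apply Matrix.inv_eq_right_inv
    rw [hS, Matrix.diagonal_mul_diagonal]
    rw [show (fun i => vp i * (vp i)⁻¹) = fun _ => (1:ℝ) from funext fun i => mul_inv_cancel₀ (hvne i)]
    exact Matrix.diagonal_one
  have hBij : ∀ i j, B i j = (vp i)⁻¹ * A i j * vp j := by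
    intro i j
    rw [hB, hSinv, hS, Matrix.mul_diagonal, Matrix.diagonal_mul]
  -- row sums of B are lamp
  have hrow : ∀ i, ∑ j, B i j = lamp := by
    intro i
    have h1 : ∑ j, B i j = (vp i)⁻¹ * ∑ j, A i j * vp j := by
      rw [Finset.mul_sum]
      exact Finset.sum_congr rfl fun j _ => by rw [hBij]; ring
    have h2 : ∑ j, A i j * vp j = lamp * vp i := by
      have := congrFun hAv i
      simpa [Matrix.mulVec, dotProduct] using this
    rw [h1, h2, mul_comm lamp (vp i), ← mul_assoc, inv_mul_cancel₀ (hvne i), one_mul]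
  -- determinant of mu - (B_C)^T is zero
  have hdetA : (mu • (1 : Matrix (Fin n) (Fin n) ℂ) - A.map ((↑) : ℝ → ℂ)).det = 0 := by
    rw [← charpoly_eval_eq']
    exact hmu
  have hdetAT : (mu • (1 : Matrix (Fin n) (Fin n) ℂ) - (A.map ((↑) : ℝ → ℂ))ᵀ).det = 0 := by
    rw [← Matrix.det_transpose (mu • 1 - A.map ((↑) : ℝ → ℂ))] at hdetA
    rw [← hdetA]
    congr 1
    rw [Matrix.transpose_sub, Matrix.transpose_smul, Matrix.transpose_one]
  set d : Fin n → ℂ := fun i => ((vp i : ℝ) : ℂ) with hd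
  have hdne : ∀ i, d i ≠ 0 := fun i => by
    simp [hd, Complex.ofReal_eq_zero, hvne i]
  have hsim : mu • (1 : Matrix (Fin n) (Fin n) ℂ) - (B.map ((↑) : ℝ → ℂ))ᵀ
      = Matrix.diagonal d * (mu • 1 - (A.map ((↑) : ℝ → ℂ))ᵀ) * Matrix.diagonal (fun i => (d i)⁻¹) := by
    ext i j
    rw [Matrix.mul_diagonal, Matrix.diagonal_mul]
    simp only [Matrix.sub_apply, Matrix.smul_apply, Matrix.transpose_apply, Matrix.map_apply,
      Matrix.one_apply, smul_eq_mul]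
    by_cases hij : i = j
    · subst hij
      rw [hBij]
      have h2 : ((vp i)⁻¹ * A i i * vp i : ℝ) = A i i := by
        rw [mul_comm, ← mul_assoc, mul_inv_cancel₀ (hvne i), one_mul]
      rw [h2]
      have hone : (if i = i then (1:ℂ) else 0) = 1 := if_pos rfl
      rw [hone, mul_comm (d i), mul_assoc, mul_inv_cancel₀ (hdne i)]
      ring
    · simp only [if_neg hij, if_neg (fun h => hij h)]
      rw [hBij]
      have hvj : ((vp j : ℝ) : ℂ) ≠ 0 := hdne j
      push_cast
      field_simp [hd, hvne j]
      ring
  have hdetB : (mu • (1 : Matrix (Fin n) (Fin n) ℂ) - (B.map ((↑) : ℝ → ℂ))ᵀ).det = 0 := by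
    rw [hsim, Matrix.det_mul, Matrix.det_mul, Matrix.det_diagonal, Matrix.det_diagonal, hdetAT]
    ring
  -- eigenvector
  obtain ⟨x, hx0, hxeq⟩ := (Matrix.exists_mulVec_eq_zero_iff).mpr hdetB
  have heig : (B.map ((↑) : ℝ → ℂ))ᵀ *ᵥ x = mu • x := by
    rw [Matrix.sub_mulVec, sub_eq_zero] at hxeq
    rw [← hxeq, Matrix.smul_mulVec, Matrix.one_mulVec]
  have heig' : ∀ i, ∑ j, ((B j i : ℝ) : ℂ) * x j = mu * x i := by
    intro i
    have := congrFun heig i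
    simpa [Matrix.mulVec, dotProduct, Matrix.transpose_apply, Matrix.map_apply] using this
  -- zero sum
  have hsum0 : ∑ j, x j = 0 := by
    have h1 : ∑ i, mu * x i = ∑ j, ((lamp : ℝ) : ℂ) * x j := by
      rw [← Finset.sum_congr rfl (fun i _ => (heig' i)), Finset.sum_comm]
      refine Finset.sum_congr rfl fun j _ => ?_
      rw [← Finset.sum_mul]
      congr 1
      rw [← Complex.ofReal_sum]
      exact congrArg _ (hrow j)
    have h2 : (mu - ((lamp : ℝ) : ℂ)) * ∑ j, x j = 0 := by
      rw [sub_mul, Finset.mul_sum, Finset.mul_sum, h1, sub_self]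
    rcases mul_eq_zero.mp h2 with h | h
    · exact absurd (sub_eq_zero.mp h) hne
    · exact h
  -- maximizing index
  obtain ⟨i₀, -, hmax⟩ := Finset.exists_max_image Finset.univ
    (fun i => ‖x i‖) ⟨⟨0, by omega⟩, Finset.mem_univ _⟩
  have hmax' : ∀ j, ‖x j‖ ≤ ‖x i₀‖ :=
    fun j => hmax j (Finset.mem_univ j)
  have hxi0 : x i₀ ≠ 0 := by
    intro h
    apply hx0
    funext j
    have h1 := hmax' j
    rw [h] at h1
    simp only [norm_zero] at h1
    exact norm_eq_zero.mp (le_antisymm h1 (norm_nonneg _))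
  have habs0 : 0 < ‖x i₀‖ := by
    simpa [norm_pos_iff] using hxi0
  -- the off-diagonal vector
  set m : Fin n → ℝ := fun j => if j = i₀ then 0 else Bᵀ i₀ j with hm
  set l : List ℝ := sortDesc (List.ofFn m) with hl
  have hlen : l.length = n := by
    simp [hl, sortDesc, List.length_reverse, List.length_insertionSort]
  obtain ⟨c, hcsum⟩ := median_sum' n (by omega) l hlen (sortDesc_sorted' _)
  have hradius : ∑ j, |m j - c| = secondTypeRadius Bᵀ i₀ := by
    have hp : ((List.ofFn m).map fun a => |a - c|).sum = (l.map fun a => |a - c|).sum :=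
      (List.Perm.map _ (sortDesc_perm' (List.ofFn m))).sum_eq.symm
    have ho : ((List.ofFn m).map fun a => |a - c|).sum = ∑ j, |m j - c| := by
      rw [List.map_ofFn, List.sum_ofFn]
      rfl
    rw [← ho, hp, hcsum]
    rfl
  -- key identity
  have hkey : (mu - ((B i₀ i₀ : ℝ) : ℂ)) * x i₀ = ∑ j, (((m j : ℝ) : ℂ) - ((c : ℝ) : ℂ)) * x j := by
    have e0 : ∀ j, ((m j : ℝ) : ℂ) * x j
        = ((B j i₀ : ℝ) : ℂ) * x j - (if j = i₀ then ((B i₀ i₀ : ℝ) : ℂ) * x i₀ else 0) := by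
      intro j
      by_cases h : j = i₀
      · subst h; simp [hm]
      · simp [hm, h, Matrix.transpose_apply]
    have e1 : ∑ j, ((m j : ℝ) : ℂ) * x j
        = mu * x i₀ - ((B i₀ i₀ : ℝ) : ℂ) * x i₀ := by
      rw [Finset.sum_congr rfl fun j _ => e0 j, Finset.sum_sub_distrib,
        Finset.sum_ite_eq' Finset.univ i₀ (fun _ => ((B i₀ i₀ : ℝ) : ℂ) * x i₀),
        if_pos (Finset.mem_univ i₀), heig' i₀]
    have e2 : ∑ j, (((m j : ℝ) : ℂ) - ((c : ℝ) : ℂ)) * x j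
        = ∑ j, ((m j : ℝ) : ℂ) * x j - ((c : ℝ) : ℂ) * ∑ j, x j := by
      rw [Finset.mul_sum, ← Finset.sum_sub_distrib]
      exact Finset.sum_congr rfl fun j _ => by ring
    rw [e2, hsum0, mul_zero, sub_zero, e1]
    ring
  -- estimate
  have hbound : ‖mu - ((B i₀ i₀ : ℝ) : ℂ)‖ ≤ secondTypeRadius Bᵀ i₀ := by
    have h1 : ‖mu - ((B i₀ i₀ : ℝ) : ℂ)‖ * ‖x i₀‖
        ≤ (∑ j, |m j - c|) * ‖x i₀‖ := by
      rw [← norm_mul, hkey]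
      calc ‖∑ j, (((m j : ℝ) : ℂ) - ((c : ℝ) : ℂ)) * x j‖
          ≤ ∑ j, ‖(((m j : ℝ) : ℂ) - ((c : ℝ) : ℂ)) * x j‖ := by
            exact norm_sum_le _ _
        _ ≤ ∑ j, |m j - c| * ‖x i₀‖ := by
            refine Finset.sum_le_sum fun j _ => ?_
            rw [norm_mul]
            have : ‖((m j : ℝ) : ℂ) - ((c : ℝ) : ℂ)‖ = |m j - c| := by
              rw [← Complex.ofReal_sub, Complex.norm_real, Real.norm_eq_abs]
            rw [this]
            exact mul_le_mul_of_nonneg_left (hmax' j) (abs_nonneg _)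
        _ = (∑ j, |m j - c|) * ‖x i₀‖ := by rw [Finset.sum_mul]
    rw [← hradius]
    exact le_of_mul_le_mul_right h1 habs0
  -- conclude
  refine Set.mem_iUnion.2 ⟨i₀, ?_⟩
  rw [secondTypeDisc, Metric.mem_closedBall, Complex.dist_eq]
  simpa [Matrix.transpose_apply] using hbound
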